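/- Let f ∈ L¹(ℝᵈ) be real, radial, not identically zero, with f = f̂ (Fourier convention f̂(y) = ∫ f(x)e^{-2πi x·y}dx), f(0) = 0, and f(x) ≥ 0 for ‖x‖ ≥ A. Then A² ≥ (1/π)·(Γ(d/2+1)/2)^{2/d}. -/

import Mathlib

open Real MeasureTheory

/-- If `f ∈ L¹(ℝᵈ)` is real, radial, nonzero, self-dual under the Fourier transform,
`f 0 = 0`, and `f(x) ≥ 0` for `‖x‖ ≥ A`, then `A² ≥ (1/π)(Γ(d/2+1)/2)^(2/d)`. -/
theorem stmt_10 (d : ℕ) (hd : 1 ≤ d) (f : EuclideanSpace ℝ (Fin d) → ℝ)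
    (hint : Integrable f) (hcont : Continuous f)
    (hradial : ∀ x y : EuclideanSpace ℝ (Fin d), ‖x‖ = ‖y‖ → f x = f y)
    (hne : f ≠ 0)
    (hself : ∀ y, FourierTransform.fourier (fun x => (f x : ℂ)) y = (f y : ℂ))
    (hf0 : f 0 = 0)
    (A : ℝ) (hA : 0 < A) (hpos : ∀ x : EuclideanSpace ℝ (Fin d), A ≤ ‖x‖ → 0 ≤ f x) :
    (1 / π) * (Real.Gamma ((d : ℝ) / 2 + 1) / 2) ^ ((2 : ℝ) / d) ≤ A ^ 2 := by
  have hdpos : (0:ℝ) < d := by exact_mod_cast hd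
  set I := ∫ x, |f x| with hI
  -- I > 0
  have hIabs : Integrable (fun x => |f x|) := hint.abs
  have hInonneg : 0 ≤ I := integral_nonneg fun x => abs_nonneg _
  have hIpos : 0 < I := by
    rcases hInonneg.lt_or_eq with h | h
    · exact h
    · exfalso
      apply hne
      have := (integral_eq_zero_iff_of_nonneg (fun x => abs_nonneg (f x)) hIabs).mp h.symm
      have hae : f =ᵐ[volume] 0 := by
        filter_upwards [this] with x hx
        simpa using hx
      exact (hcont.ae_eq_iff_eq volume continuous_const).mp hae
  -- ∫ f = 0
  have hint0 : ∫ x, f x = 0 := by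
    have h0 := hself 0
    rw [Real.fourier_eq] at h0
    simp only [inner_zero_right, neg_zero, AddChar.map_zero_eq_one, one_smul, hf0,
      Complex.ofReal_zero] at h0
    have h1 : ∫ x, ((f x : ℝ) : ℂ) = ((∫ x, f x : ℝ) : ℂ) := integral_ofReal
    rw [h1] at h0
    exact_mod_cast h0
  -- pointwise bound
  have hbd : ∀ y, |f y| ≤ I := by
    intro y
    have h1 : ‖FourierTransform.fourier (fun x => (f x : ℂ)) y‖ ≤ ∫ x, ‖(f x : ℂ)‖ :=
      VectorFourier.norm_fourierIntegral_le_integral_norm _ _ _ _ _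
    rw [hself y] at h1
    simpa using h1
  -- split
  set B := Metric.ball (0 : EuclideanSpace ℝ (Fin d)) A with hB
  have hBm : MeasurableSet B := measurableSet_ball
  have hvolB : volume B < ⊤ := measure_ball_lt_top
  have hsplit : I = (∫ x in B, |f x|) + ∫ x in Bᶜ, |f x| := by
    rw [hI, ← integral_add_compl hBm hIabs]
  have hcompl : ∀ x ∈ Bᶜ, |f x| = f x := by
    intro x hx
    refine abs_of_nonneg (hpos x ?_)
    have : ¬ dist x 0 < A := by simpa [hB, Metric.mem_ball] using hx
    simpa [dist_zero_right] using not_lt.mp this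
  have hfc : (∫ x in Bᶜ, |f x|) = ∫ x in Bᶜ, f x :=
    setIntegral_congr_fun hBm.compl hcompl
  have hsum : (∫ x in B, f x) + ∫ x in Bᶜ, f x = 0 := by
    rw [integral_add_compl hBm hint]; exact hint0
  have hle1 : (∫ x in Bᶜ, f x) ≤ ∫ x in B, |f x| := by
    have : (∫ x in Bᶜ, f x) = - ∫ x in B, f x := by linarith
    rw [this]
    calc - ∫ x in B, f x ≤ |∫ x in B, f x| := neg_le_abs _
      _ ≤ ∫ x in B, |f x| := by
        simpa using norm_integral_le_integral_norm (μ := volume.restrict B) f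
  have hIle : I ≤ 2 * ∫ x in B, |f x| := by
    rw [hsplit, hfc]; linarith
  have hball : (∫ x in B, |f x|) ≤ I * (volume B).toReal := by
    calc (∫ x in B, |f x|) ≤ ∫ x in B, I :=
          setIntegral_mono_on hIabs.integrableOn (integrableOn_const hvolB.ne) hBm
            (fun x _ => hbd x)
      _ = (volume B).toReal * I := by rw [setIntegral_const, smul_eq_mul, measureReal_def]
      _ = I * (volume B).toReal := by ring
  have hvol : 1 / 2 ≤ (volume B).toReal := by
    have h2 : I ≤ 2 * I * (volume B).toReal := by
      calc I ≤ 2 * ∫ x in B, |f x| := hIle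
        _ ≤ 2 * (I * (volume B).toReal) := by linarith
        _ = 2 * I * (volume B).toReal := by ring
    nlinarith
  -- compute volume
  have : Nonempty (Fin d) := ⟨⟨0, hd⟩⟩
  have hvolcalc : (volume B).toReal = A ^ d * (Real.sqrt π ^ d / Real.Gamma (d / 2 + 1)) := by
    rw [hB, EuclideanSpace.volume_ball]
    rw [ENNReal.toReal_mul, ENNReal.toReal_pow, ENNReal.toReal_ofReal hA.le,
      ENNReal.toReal_ofReal]
    · simp [Fintype.card_fin]
    · positivity
  rw [hvolcalc] at hvol
  -- final algebra
  have hGpos : 0 < Real.Gamma ((d:ℝ) / 2 + 1) := Real.Gamma_pos_of_pos (by positivity)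
  have hkey : Real.Gamma ((d:ℝ) / 2 + 1) / 2 ≤ (A * Real.sqrt π) ^ d := by
    rw [mul_pow]
    rw [← mul_div_assoc, le_div_iff₀ hGpos] at hvol
    linarith
  have hrp : (Real.Gamma ((d:ℝ)/2+1)/2) ^ ((2:ℝ)/d) ≤ ((A * Real.sqrt π) ^ d) ^ ((2:ℝ)/d) :=
    Real.rpow_le_rpow (by positivity) hkey (by positivity)
  have hAs : 0 < A * Real.sqrt π := by positivity
  have heq : ((A * Real.sqrt π) ^ d) ^ ((2:ℝ)/d) = A ^ 2 * π := by
    rw [← Real.rpow_natCast (A * Real.sqrt π) d, ← Real.rpow_mul hAs.le]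
    rw [mul_div_cancel₀ _ (ne_of_gt hdpos)]
    rw [show ((2:ℝ) = ((2:ℕ):ℝ)) by norm_num, Real.rpow_natCast]
    rw [mul_pow, Real.sq_sqrt pi_pos.le]
  rw [heq] at hrp
  rw [div_mul_eq_mul_div, one_mul, div_le_iff₀ pi_pos]
  linarith
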